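/- If C₁ and C₂ are convex subsets of a real vector space and x ∈ C₁ ∩ C₂, then the minimal face of x in C₁ ∩ C₂ equals the intersection of the minimal face of x in C₁ with the minimal face of x in C₂. -/

import Mathlib

open Set

def IsFaceOf {W : Type*} [AddCommGroup W] [Module ℝ W] (C F : Set W) : Prop :=
  F ⊆ C ∧ Convex ℝ F ∧ ∀ y z : W, y ≠ z → openSegment ℝ y z ⊆ C →
    (openSegment ℝ y z ∩ F).Nonempty → openSegment ℝ y z ⊆ F

def minimalFace {W : Type*} [AddCommGroup W] [Module ℝ W] (C : Set W) (x : W) : Set W :=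
  ⋂₀ {F | IsFaceOf C F ∧ x ∈ F}

section
variable {V : Type*} [AddCommGroup V] [Module ℝ V]

lemma seg_mem {C : Set V} (hC : Convex ℝ C) {x : V} (hx : x ∈ C) {d : V} {s t : ℝ}
    (h : x + s • d ∈ C) (ht0 : 0 ≤ t) (hts : t ≤ s) : x + t • d ∈ C := by
  by_cases hs : s = 0
  · have ht : t = 0 := le_antisymm (hts.trans hs.le) ht0
    simpa [ht] using hx
  · have hspos : 0 < s := lt_of_le_of_ne (ht0.trans hts) (Ne.symm hs)
    have key := hC hx h (show (0:ℝ) ≤ 1 - t/s by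
        rw [sub_nonneg]; exact div_le_one_of_le₀ hts hspos.le)
      (show (0:ℝ) ≤ t/s by positivity) (by ring)
    have : (1 - t/s) • x + (t/s) • (x + s • d) = x + t • d := by
      match_scalars <;> field_simp <;> ring
    rwa [this] at key

lemma seg_mem_sub {C : Set V} (hC : Convex ℝ C) {x : V} (hx : x ∈ C) {d : V} {s t : ℝ}
    (h : x - s • d ∈ C) (ht0 : 0 ≤ t) (hts : t ≤ s) : x - t • d ∈ C := by
  have h' : x + s • (-d) ∈ C := by simpa [smul_neg, sub_eq_add_neg] using h
  have := seg_mem hC hx h' ht0 hts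
  simpa [smul_neg, sub_eq_add_neg] using this

def elemFace (C : Set V) (x : V) : Set V :=
  {y | y = x ∨ ((∃ δ > (0:ℝ), x - δ • (y - x) ∈ C) ∧ ∃ ε > (0:ℝ), x + (1 + ε) • (y - x) ∈ C)}

lemma elemFace_subset {C : Set V} {x : V} (hC : Convex ℝ C) (hx : x ∈ C) :
    elemFace C x ⊆ C := by
  rintro y (rfl | ⟨-, ⟨ε, hε, h⟩⟩)
  · exact hx
  · have := seg_mem hC hx h zero_le_one (by linarith)
    simpa using this

lemma convex_elemFace {C : Set V} {x : V} (hC : Convex ℝ C) (hx : x ∈ C) :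
    Convex ℝ (elemFace C x) := by
  intro a ha b hb α β hα hβ hαβ
  by_cases hα0 : α = 0
  · have hβ1 : β = 1 := by linarith
    simpa [hα0, hβ1] using hb
  by_cases hβ0 : β = 0
  · have hα1 : α = 1 := by linarith
    simpa [hβ0, hα1] using ha
  have hαpos : 0 < α := lt_of_le_of_ne hα (Ne.symm hα0)
  have hβpos : 0 < β := lt_of_le_of_ne hβ (Ne.symm hβ0)
  obtain rfl : α = 1 - β := by linarith
  have hβ1 : β ≤ 1 := by linarith
  rcases ha with hax | ⟨⟨δ₁, hδ₁, h1⟩, ⟨ε₁, hε₁, h2⟩⟩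
  · rw [hax]
    rcases hb with hbx | ⟨⟨δ₂, hδ₂, h3⟩, ⟨ε₂, hε₂, h4⟩⟩
    · rw [hbx]; left; match_scalars; ring
    · right
      constructor
      · refine ⟨δ₂ / β, by positivity, ?_⟩
        have : x - (δ₂/β) • (((1-β) • x + β • b) - x) = x - δ₂ • (b - x) := by
          match_scalars <;> field_simp <;> ring
        rwa [this]
      · refine ⟨ε₂, hε₂, ?_⟩
        have : x + (1+ε₂) • (((1-β) • x + β • b) - x) = x + ((1+ε₂)*β) • (b - x) := by
          match_scalars <;> ring
        rw [this]
        exact seg_mem hC hx h4 (by positivity) (by nlinarith)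
  · rcases hb with hbx | ⟨⟨δ₂, hδ₂, h3⟩, ⟨ε₂, hε₂, h4⟩⟩
    · rw [hbx]
      right
      constructor
      · refine ⟨δ₁ / (1-β), by positivity, ?_⟩
        have : x - (δ₁/(1-β)) • (((1-β) • a + β • x) - x) = x - δ₁ • (a - x) := by
          match_scalars <;> field_simp <;> ring
        rwa [this]
      · refine ⟨ε₁, hε₁, ?_⟩
        have : x + (1+ε₁) • (((1-β) • a + β • x) - x) = x + ((1+ε₁)*(1-β)) • (a - x) := by
          match_scalars <;> ring
        rw [this]
        exact seg_mem hC hx h2 (by positivity) (by nlinarith)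
    · right
      constructor
      · refine ⟨min δ₁ δ₂, by positivity, ?_⟩
        have t1 : x - (min δ₁ δ₂) • (a - x) ∈ C :=
          seg_mem_sub hC hx h1 (le_min hδ₁.le hδ₂.le) (min_le_left _ _)
        have t2 : x - (min δ₁ δ₂) • (b - x) ∈ C :=
          seg_mem_sub hC hx h3 (le_min hδ₁.le hδ₂.le) (min_le_right _ _)
        have key := hC t1 t2 hα hβ hαβ
        have : (1-β) • (x - (min δ₁ δ₂) • (a - x)) + β • (x - (min δ₁ δ₂) • (b - x))
            = x - (min δ₁ δ₂) • (((1-β) • a + β • b) - x) := by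
          match_scalars <;> ring
        rwa [this] at key
      · refine ⟨min ε₁ ε₂, by positivity, ?_⟩
        have t1 : x + (1 + min ε₁ ε₂) • (a - x) ∈ C :=
          seg_mem hC hx h2 (by positivity) (by simp [min_le_left, min_le_right])
        have t2 : x + (1 + min ε₁ ε₂) • (b - x) ∈ C :=
          seg_mem hC hx h4 (by positivity) (by simp [min_le_left, min_le_right])
        have key := hC t1 t2 hα hβ hαβ
        have : (1-β) • (x + (1 + min ε₁ ε₂) • (a - x)) + β • (x + (1 + min ε₁ ε₂) • (b - x))
            = x + (1 + min ε₁ ε₂) • (((1-β) • a + β • b) - x) := by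
          match_scalars <;> ring
        rwa [this] at key

lemma convex3 {C : Set V} (hC : Convex ℝ C) {a b c : V} (ha : a ∈ C) (hb : b ∈ C) (hc : c ∈ C)
    {α β γ : ℝ} (hα : 0 ≤ α) (hβ : 0 ≤ β) (hγ : 0 ≤ γ) (h : α + β + γ = 1) :
    α • a + β • b + γ • c ∈ C := by
  by_cases hab : α + β = 0
  · have hα0 : α = 0 := by linarith
    have hβ0 : β = 0 := by linarith
    have hγ1 : γ = 1 := by linarith
    simpa [hα0, hβ0, hγ1] using hc
  · have hab' : 0 < α + β := lt_of_le_of_ne (by linarith) (Ne.symm hab)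
    have hz : (α/(α+β)) • a + (β/(α+β)) • b ∈ C :=
      hC ha hb (by positivity) (by positivity) (by field_simp)
    have key := hC hz hc (show (0:ℝ) ≤ α + β by linarith) hγ (by linarith)
    have : (α+β) • ((α/(α+β)) • a + (β/(α+β)) • b) + γ • c = α • a + β • b + γ • c := by
      match_scalars <;> field_simp <;> ring
    rwa [this] at key

lemma isFace_elemFace {C : Set V} {x : V} (hC : Convex ℝ C) (hx : x ∈ C) :
    IsFaceOf C (elemFace C x) := by
  refine ⟨elemFace_subset hC hx, convex_elemFace hC hx, ?_⟩
  rintro u v huv hsub ⟨w, hwσ, hwM⟩ p hpσ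
  have hpC : p ∈ C := hsub hpσ
  obtain ⟨a₁, b₁, ha₁, hb₁, hab₁, hw⟩ := hwσ
  obtain ⟨a₂, b₂, ha₂, hb₂, hab₂, hp⟩ := hpσ
  obtain rfl : a₁ = 1 - b₁ := by linarith
  obtain rfl : a₂ = 1 - b₂ := by linarith
  have hb₁' : b₁ < 1 := by linarith
  have hb₂' : b₂ < 1 := by linarith
  obtain ⟨c, hc⟩ : ∃ c : ℝ, c = b₂ - b₁ := ⟨_, rfl⟩
  by_cases hc0 : c = 0
  · obtain rfl : b₂ = b₁ := by rw [hc] at hc0; linarith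
    have hpw : p = w := by rw [← hw, ← hp]
    rwa [hpw]
  have hcabs : 0 < |c| := abs_pos.mpr hc0
  rcases hwM with hwx | ⟨⟨δ₀, hδ₀, hB⟩, ⟨ε₀, hε₀, hA⟩⟩
  · -- w = x : x lies on the open segment
    rw [hwx] at hw
    right
    constructor
    · obtain ⟨δ, hδdef⟩ : ∃ δ : ℝ, δ = min b₁ (1 - b₁) / (2 * |c|) := ⟨_, rfl⟩
      have hδpos : 0 < δ := by
        rw [hδdef]; exact div_pos (lt_min hb₁ (by linarith)) (by positivity)
      have habs : |δ * c| = min b₁ (1 - b₁) / 2 := by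
        rw [abs_mul, abs_of_pos hδpos, hδdef]; field_simp
      have hub : δ * c ≤ min b₁ (1-b₁) / 2 := (le_abs_self _).trans habs.le
      have hlb : -(min b₁ (1-b₁) / 2) ≤ δ * c := by
        have := neg_abs_le (δ * c); rw [habs] at this; exact this
      have hmin1 : min b₁ (1-b₁) ≤ b₁ := min_le_left _ _
      have hmin2 : min b₁ (1-b₁) ≤ 1 - b₁ := min_le_right _ _
      refine ⟨δ, hδpos, hsub ⟨1 - (b₁ - δ*c), b₁ - δ*c, by linarith, by linarith, by ring, ?_⟩⟩
      rw [← hp, ← hw, hc]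
      match_scalars <;> ring
    · obtain ⟨ε, hεdef⟩ : ∃ ε : ℝ, ε = min b₂ (1 - b₂) / (2 * |c|) := ⟨_, rfl⟩
      have hεpos : 0 < ε := by
        rw [hεdef]; exact div_pos (lt_min hb₂ (by linarith)) (by positivity)
      have habs : |ε * c| = min b₂ (1 - b₂) / 2 := by
        rw [abs_mul, abs_of_pos hεpos, hεdef]; field_simp
      have hub : ε * c ≤ min b₂ (1-b₂) / 2 := (le_abs_self _).trans habs.le
      have hlb : -(min b₂ (1-b₂) / 2) ≤ ε * c := by
        have := neg_abs_le (ε * c); rw [habs] at this; exact this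
      have hmin1 : min b₂ (1-b₂) ≤ b₂ := min_le_left _ _
      have hmin2 : min b₂ (1-b₂) ≤ 1 - b₂ := min_le_right _ _
      refine ⟨ε, hεpos, hsub ⟨1 - (b₂ + ε*c), b₂ + ε*c, by linarith, by linarith, by ring, ?_⟩⟩
      rw [← hp, ← hw, hc]
      match_scalars <;> ring
  · -- general w with witnesses
    right
    constructor
    · -- δ part
      obtain ⟨η, hηdef⟩ : ∃ η : ℝ, η = min b₁ (1 - b₁) / (2 * |c|) := ⟨_, rfl⟩
      have hηpos : 0 < η := by
        rw [hηdef]; exact div_pos (lt_min hb₁ (by linarith)) (by positivity)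
      have habs : |η * c| = min b₁ (1 - b₁) / 2 := by
        rw [abs_mul, abs_of_pos hηpos, hηdef]; field_simp
      have hub : η * c ≤ min b₁ (1-b₁) / 2 := (le_abs_self _).trans habs.le
      have hlb : -(min b₁ (1-b₁) / 2) ≤ η * c := by
        have := neg_abs_le (η * c); rw [habs] at this; exact this
      have hmin1 : min b₁ (1-b₁) ≤ b₁ := min_le_left _ _
      have hmin2 : min b₁ (1-b₁) ≤ 1 - b₁ := min_le_right _ _
      have hw' : (1 - (b₁ - η*c)) • u + (b₁ - η*c) • v ∈ C :=
        hsub ⟨1 - (b₁ - η*c), b₁ - η*c, by linarith, by linarith, by ring, rfl⟩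
      obtain ⟨denom, hdenom⟩ : ∃ d : ℝ, d = 2 * (1 + η + δ₀) := ⟨_, rfl⟩
      have hdpos : 0 < denom := by rw [hdenom]; positivity
      have h2 : (2 * (1 + η + δ₀) : ℝ) ≠ 0 := ne_of_gt (by linarith)
      refine ⟨η * δ₀ / denom, div_pos (mul_pos hηpos hδ₀) hdpos, ?_⟩
      have key := convex3 hC hB hw' hx
        (show (0:ℝ) ≤ (1+η)/denom from le_of_lt (div_pos (by linarith) hdpos))
        (show (0:ℝ) ≤ δ₀/denom from le_of_lt (div_pos hδ₀ hdpos))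
        (show (0:ℝ) ≤ 1/2 by norm_num)
        (show (1+η)/denom + δ₀/denom + 1/2 = 1 by rw [hdenom]; field_simp [h2]; ring)
      have heq : ((1+η)/denom) • (x - δ₀ • (w - x)) +
          (δ₀/denom) • ((1 - (b₁ - η*c)) • u + (b₁ - η*c) • v) + (1/2 : ℝ) • x
          = x - (η * δ₀ / denom) • (p - x) := by
        rw [← hp, ← hw, hc, hdenom]
        match_scalars <;> field_simp [h2] <;> ring
      rwa [heq] at key
    · -- ε part
      obtain ⟨η, hηdef⟩ : ∃ η : ℝ, η = min b₂ (1 - b₂) / (2 * |c|) := ⟨_, rfl⟩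
      have hηpos : 0 < η := by
        rw [hηdef]; exact div_pos (lt_min hb₂ (by linarith)) (by positivity)
      have habs : |η * c| = min b₂ (1 - b₂) / 2 := by
        rw [abs_mul, abs_of_pos hηpos, hηdef]; field_simp
      have hub : η * c ≤ min b₂ (1-b₂) / 2 := (le_abs_self _).trans habs.le
      have hlb : -(min b₂ (1-b₂) / 2) ≤ η * c := by
        have := neg_abs_le (η * c); rw [habs] at this; exact this
      have hmin1 : min b₂ (1-b₂) ≤ b₂ := min_le_left _ _
      have hmin2 : min b₂ (1-b₂) ≤ 1 - b₂ := min_le_right _ _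
      have hp' : (1 - (b₂ + η*c)) • u + (b₂ + η*c) • v ∈ C :=
        hsub ⟨1 - (b₂ + η*c), b₂ + η*c, by linarith, by linarith, by ring, rfl⟩
      obtain ⟨denom, hdenom⟩ : ∃ d : ℝ, d = 2 * (1 + η + ε₀) := ⟨_, rfl⟩
      have hdpos : 0 < denom := by rw [hdenom]; positivity
      have h2 : (2 * (1 + η + ε₀) : ℝ) ≠ 0 := ne_of_gt (by linarith)
      refine ⟨ε₀ * η / denom, div_pos (mul_pos hε₀ hηpos) hdpos, ?_⟩
      have key := convex3 hC hp' hA hpC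
        (show (0:ℝ) ≤ (1+ε₀)/denom from le_of_lt (div_pos (by linarith) hdpos))
        (show (0:ℝ) ≤ η/denom from le_of_lt (div_pos hηpos hdpos))
        (show (0:ℝ) ≤ 1/2 by norm_num)
        (show (1+ε₀)/denom + η/denom + 1/2 = 1 by rw [hdenom]; field_simp [h2]; ring)
      have heq : ((1+ε₀)/denom) • ((1 - (b₂ + η*c)) • u + (b₂ + η*c) • v) +
          (η/denom) • (x + (1+ε₀) • (w - x)) + (1/2 : ℝ) • p
          = x + (1 + ε₀ * η / denom) • (p - x) := by
        rw [← hp, ← hw, hc, hdenom]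
        match_scalars <;> field_simp [h2] <;> ring
      rwa [heq] at key

lemma elemFace_subset_face {C : Set V} {x : V} (hC : Convex ℝ C) {F : Set V}
    (hF : IsFaceOf C F) (hxF : x ∈ F) : elemFace C x ⊆ F := by
  rintro y (rfl | ⟨⟨δ, hδ, hb⟩, ⟨ε, hε, ha⟩⟩)
  · exact hxF
  by_cases hyx : y = x
  · rw [hyx]; exact hxF
  have hs : (0:ℝ) < 1 + ε + δ := by linarith
  have hAB : x + (1+ε) • (y - x) ≠ x - δ • (y - x) := by
    intro h
    apply hyx
    have h2 : (1 + ε + δ) • (y - x) = 0 := by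
      have := sub_eq_zero_of_eq h
      rw [← this]; module
    rcases smul_eq_zero.mp h2 with h3 | h3
    · exact absurd h3 (ne_of_gt hs)
    · exact sub_eq_zero.mp h3
  have hsubC : openSegment ℝ (x + (1+ε) • (y - x)) (x - δ • (y - x)) ⊆ C :=
    hC.openSegment_subset ha hb
  have hxseg : x ∈ openSegment ℝ (x + (1+ε) • (y - x)) (x - δ • (y - x)) := by
    refine ⟨δ/(1+ε+δ), (1+ε)/(1+ε+δ), div_pos (by linarith) hs, div_pos (by linarith) hs,
      by field_simp; ring, ?_⟩
    match_scalars <;> field_simp <;> ring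
  have hyseg : y ∈ openSegment ℝ (x + (1+ε) • (y - x)) (x - δ • (y - x)) := by
    refine ⟨(1+δ)/(1+ε+δ), ε/(1+ε+δ), div_pos (by linarith) hs, div_pos (by linarith) hs,
      by field_simp; ring, ?_⟩
    match_scalars <;> field_simp <;> ring
  exact hF.2.2 _ _ hAB hsubC ⟨x, hxseg, hxF⟩ hyseg

lemma minimalFace_eq_elemFace {C : Set V} {x : V} (hC : Convex ℝ C) (hx : x ∈ C) :
    minimalFace C x = elemFace C x := by
  apply subset_antisymm
  · exact sInter_subset_of_mem ⟨isFace_elemFace hC hx, Or.inl rfl⟩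
  · intro y hy
    rw [minimalFace, mem_sInter]
    rintro F ⟨hF, hxF⟩
    exact elemFace_subset_face hC hF hxF hy

lemma elemFace_inter {C₁ C₂ : Set V} (hC₁ : Convex ℝ C₁) (hC₂ : Convex ℝ C₂)
    {x : V} (hx₁ : x ∈ C₁) (hx₂ : x ∈ C₂) :
    elemFace (C₁ ∩ C₂) x = elemFace C₁ x ∩ elemFace C₂ x := by
  ext y
  constructor
  · rintro (rfl | ⟨⟨δ, hδ, hb⟩, ⟨ε, hε, ha⟩⟩)
    · exact ⟨Or.inl rfl, Or.inl rfl⟩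
    · exact ⟨Or.inr ⟨⟨δ, hδ, hb.1⟩, ⟨ε, hε, ha.1⟩⟩, Or.inr ⟨⟨δ, hδ, hb.2⟩, ⟨ε, hε, ha.2⟩⟩⟩
  · rintro ⟨h1, h2⟩
    rcases h1 with rfl | ⟨⟨δ₁, hδ₁, hb₁⟩, ⟨ε₁, hε₁, ha₁⟩⟩
    · exact Or.inl rfl
    rcases h2 with hyx | ⟨⟨δ₂, hδ₂, hb₂⟩, ⟨ε₂, hε₂, ha₂⟩⟩
    · exact Or.inl hyx
    right
    constructor
    · refine ⟨min δ₁ δ₂, lt_min hδ₁ hδ₂, ?_, ?_⟩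
      · exact seg_mem_sub hC₁ hx₁ hb₁ (lt_min hδ₁ hδ₂).le (min_le_left _ _)
      · exact seg_mem_sub hC₂ hx₂ hb₂ (lt_min hδ₁ hδ₂).le (min_le_right _ _)
    · refine ⟨min ε₁ ε₂, lt_min hε₁ hε₂, ?_, ?_⟩
      · exact seg_mem hC₁ hx₁ ha₁ (by positivity) (by linarith [min_le_left ε₁ ε₂])
      · exact seg_mem hC₂ hx₂ ha₂ (by positivity) (by linarith [min_le_right ε₁ ε₂])

end

theorem minimalFace_inter
    {V : Type*} [AddCommGroup V] [Module ℝ V]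
    {C₁ C₂ : Set V} (hC₁ : Convex ℝ C₁) (hC₂ : Convex ℝ C₂)
    {x : V} (hx₁ : x ∈ C₁) (hx₂ : x ∈ C₂) :
    minimalFace (C₁ ∩ C₂) x = minimalFace C₁ x ∩ minimalFace C₂ x := by
  rw [minimalFace_eq_elemFace (hC₁.inter hC₂) ⟨hx₁, hx₂⟩,
    minimalFace_eq_elemFace hC₁ hx₁, minimalFace_eq_elemFace hC₂ hx₂,
    elemFace_inter hC₁ hC₂ hx₁ hx₂]
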